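/- For all positive integers n and l, the set S(T_2) of valences of type-T_2 super edge-magic labelings of K_{1,n} ∪ lK_1 consists of consecutive integers: whenever k_1, k_2 ∈ S(T_2) and k is an integer with k_1 ≤ k ≤ k_2, then k ∈ S(T_2). -/

import Mathlib

/-- `f` is an edge-magic labeling of the graph `G` with valence `k`:
`f` is a bijection from `V(G) ∪ E(G)` onto `{1, …, p + q}` and
`f u + f v + f uv = k` for every edge `uv`. -/
def IsEdgeMagic {V : Type*} [Fintype V] (G : SimpleGraph V)
    (f : V ⊕ G.edgeSet → ℕ) (k : ℕ) : Prop :=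
  Set.BijOn f Set.univ (Set.Icc 1 (Fintype.card V + G.edgeSet.ncard)) ∧
  ∀ u v, ∀ h : G.Adj u v,
    f (Sum.inl u) + f (Sum.inl v) + f (Sum.inr ⟨s(u, v), G.mem_edgeSet.mpr h⟩) = k

/-- `f` is a super edge-magic labeling of `G` with valence `k`: an edge-magic
labeling whose vertex labels are exactly `{1, …, p}`. -/
def IsSuperEdgeMagic {V : Type*} [Fintype V] (G : SimpleGraph V)
    (f : V ⊕ G.edgeSet → ℕ) (k : ℕ) : Prop :=
  IsEdgeMagic G f k ∧ ∀ v, f (Sum.inl v) ∈ Set.Icc 1 (Fintype.card V)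

/-- The graph `K_{1,n} ∪ lK_1`: the disjoint union of the star `K_{1,n}`
(with center `0` and leaves `1, …, n`) and `l` isolated vertices
(`n+1, …, n+l`), on `n + l + 1` vertices. -/
def starUnion (n l : ℕ) : SimpleGraph (Fin (n + l + 1)) where
  Adj u v := (u = 0 ∧ v ≠ 0 ∧ (v : ℕ) ≤ n) ∨ (v = 0 ∧ u ≠ 0 ∧ (u : ℕ) ≤ n)
  symm := ⟨fun u v h => h.symm⟩
  loopless := ⟨fun v h => by rcases h with ⟨h1, h2, _⟩ | ⟨h1, h2, _⟩ <;> exact h2 h1⟩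

lemma mem_edgeSet_iff (n l : ℕ) (e : Sym2 (Fin (n+l+1))) :
    e ∈ (starUnion n l).edgeSet ↔ ∃ v : Fin (n+l+1), v ≠ 0 ∧ (v:ℕ) ≤ n ∧ e = s(0, v) := by
  induction e using Sym2.ind with
  | _ a b =>
    simp only [SimpleGraph.mem_edgeSet, starUnion, Sym2.eq_iff]
    constructor
    · rintro (⟨h1,h2,h3⟩|⟨h1,h2,h3⟩)
      · exact ⟨b, h2, h3, Or.inl ⟨h1, rfl⟩⟩
      · exact ⟨a, h2, h3, Or.inr ⟨rfl, h1⟩⟩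
    · rintro ⟨v, h1, h2, (⟨rfl,rfl⟩|⟨rfl,rfl⟩)⟩
      · exact Or.inl ⟨rfl, h1, h2⟩
      · exact Or.inr ⟨rfl, h1, h2⟩

lemma leafSet_ncard (n l : ℕ) :
    ({v : Fin (n+l+1) | v ≠ 0 ∧ (v:ℕ) ≤ n}).ncard = n := by
  have h : {v : Fin (n+l+1) | v ≠ 0 ∧ (v:ℕ) ≤ n}
      = (fun i : Fin n => (⟨(i:ℕ)+1, by omega⟩ : Fin (n+l+1))) '' Set.univ := by
    ext v
    simp only [Set.mem_setOf_eq, Set.image_univ, Set.mem_range]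
    constructor
    · rintro ⟨h1, h2⟩
      have hv : (v:ℕ) ≠ 0 := fun h => h1 (Fin.ext (by simp [h]))
      exact ⟨⟨(v:ℕ)-1, by omega⟩, by apply Fin.ext; simp; omega⟩
    · rintro ⟨i, rfl⟩
      refine ⟨fun h => ?_, by have := i.isLt; simp⟩
      have := congrArg Fin.val h
      simp at this
  have hinj : Function.Injective (fun i : Fin n => (⟨(i:ℕ)+1, by omega⟩ : Fin (n+l+1))) := by
    intro i j hij
    have := congrArg Fin.val hij; simp at this; exact Fin.ext this
  rw [h, Set.ncard_image_of_injective _ hinj, Set.ncard_univ]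
  simp

lemma edge_ncard (n l : ℕ) : (starUnion n l).edgeSet.ncard = n := by
  have h : (starUnion n l).edgeSet
      = (fun v : Fin (n+l+1) => s((0 : Fin (n+l+1)), v)) '' {v | v ≠ 0 ∧ (v:ℕ) ≤ n} := by
    ext e; rw [mem_edgeSet_iff]
    simp only [Set.mem_image, Set.mem_setOf_eq]
    constructor
    · rintro ⟨v, h1, h2, rfl⟩; exact ⟨v, ⟨h1, h2⟩, rfl⟩
    · rintro ⟨v, ⟨h1, h2⟩, rfl⟩; exact ⟨v, h1, h2, rfl⟩
  rw [h, Set.ncard_image_of_injOn, leafSet_ncard]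
  rintro v ⟨hv, -⟩ w ⟨hw, -⟩ h
  rw [Sym2.eq_iff] at h
  rcases h with ⟨-, h⟩ | ⟨h1, h2⟩
  · exact h
  · exact absurd h1.symm hw

/-- vertex label function (on `ℕ` values of vertices) -/
def vl (n a c v : ℕ) : ℕ :=
  if v = 0 then c else if v ≤ n then a + v - 1
  else if v - n < a then v - n else if v < c then v else v + 1

/-- edge pair-sum -/
def es {m : ℕ} : Sym2 (Fin m) → ℕ :=
  Sym2.lift ⟨fun u v => (u:ℕ) + (v:ℕ), fun _ _ => Nat.add_comm _ _⟩

def F (n l a c : ℕ) : Fin (n+l+1) ⊕ (starUnion n l).edgeSet → ℕ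
  | Sum.inl v => vl n a c (v:ℕ)
  | Sum.inr e => (n+l+1) + n + 1 - es e.1

lemma vl_inj (n l a c : ℕ) (ha : 1 ≤ a) (hac : a + n ≤ c) (hc : c ≤ n+l+1) :
    ∀ v w, v ≤ n+l → w ≤ n+l → vl n a c v = vl n a c w → v = w := by
  intro v w hv hw h
  unfold vl at h
  split_ifs at h <;> omega

lemma vl_le (n l a c : ℕ) (ha : 1 ≤ a) (hac : a + n ≤ c) (hc : c ≤ n+l+1) :
    ∀ v, v ≤ n+l → 1 ≤ vl n a c v ∧ vl n a c v ≤ n+l+1 := by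
  intro v hv
  unfold vl
  split_ifs <;> omega

lemma aux_construct (n l a c : ℕ) (hn : 1 ≤ n) (hl : 1 ≤ l) (ha : 1 ≤ a)
    (hac : a + n ≤ c) (hc : c ≤ n+l+1) :
    ∃ f, IsSuperEdgeMagic (starUnion n l) f (a + c + (n+l+1) + n) ∧
      ∀ v : Fin (n + l + 1), v ≠ 0 → (v : ℕ) ≤ n →
        f (Sum.inl v) < f (Sum.inl 0) := by
  set p := n + l + 1 with hp
  have hcard : Fintype.card (Fin p) = p := Fintype.card_fin p
  have hq := edge_ncard n l
  have h0 : ((0 : Fin p) : ℕ) = 0 := rfl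
  -- values of F
  have hFc : F n l a c (Sum.inl 0) = c := by simp [F, vl, h0]
  have hFleaf : ∀ v : Fin p, v ≠ 0 → (v:ℕ) ≤ n →
      F n l a c (Sum.inl v) = a + (v:ℕ) - 1 := by
    intro v hv hvn
    have hv' : (v:ℕ) ≠ 0 := fun h => hv (Fin.ext (by simp [h, h0]))
    simp [F, vl, hv', hvn]
  have hFedge : ∀ (e : (starUnion n l).edgeSet) (v : Fin p), e.1 = s(0, v) →
      F n l a c (Sum.inr e) = p + n + 1 - (v:ℕ) := by
    intro e v he
    simp [F, he, es, h0, hp]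
  refine ⟨F n l a c, ⟨⟨?_, ?_⟩, ?_⟩, ?_⟩
  · -- BijOn
    rw [hcard, hq]
    have hmap : ∀ x, F n l a c x ∈ Set.Icc 1 (p + n) := by
      rintro (v | e)
      · have := vl_le n l a c ha hac hc (v:ℕ) (by have := v.isLt; omega)
        simp only [Set.mem_Icc, F]
        omega
      · obtain ⟨v, hv, hvn, he⟩ := (mem_edgeSet_iff n l e.1).mp e.2
        rw [hFedge e v he]
        have hv' : (v:ℕ) ≠ 0 := fun h => hv (Fin.ext (by simp [h, h0]))
        simp only [Set.mem_Icc]; omega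
    have hinj : Set.InjOn (F n l a c) Set.univ := by
      rintro (v | e) - (w | e') - h
      · have := vl_inj n l a c ha hac hc (v:ℕ) (w:ℕ)
          (by have := v.isLt; omega) (by have := w.isLt; omega) h
        exact congrArg Sum.inl (Fin.ext this)
      · obtain ⟨w', hw, hwn, he⟩ := (mem_edgeSet_iff n l e'.1).mp e'.2
        rw [hFedge e' w' he] at h
        have h1 := (vl_le n l a c ha hac hc (v:ℕ) (by have := v.isLt; omega)).2
        have hw' : (w':ℕ) ≠ 0 := fun hh => hw (Fin.ext (by simp [hh, h0]))
        simp only [F] at h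
        omega
      · obtain ⟨w', hw, hwn, he⟩ := (mem_edgeSet_iff n l e.1).mp e.2
        rw [hFedge e w' he] at h
        have h1 := (vl_le n l a c ha hac hc (w:ℕ) (by have := w.isLt; omega)).2
        have hw' : (w':ℕ) ≠ 0 := fun hh => hw (Fin.ext (by simp [hh, h0]))
        simp only [F] at h
        omega
      · obtain ⟨v, hv, hvn, hev⟩ := (mem_edgeSet_iff n l e.1).mp e.2
        obtain ⟨w, hw, hwn, hew⟩ := (mem_edgeSet_iff n l e'.1).mp e'.2
        rw [hFedge e v hev, hFedge e' w hew] at h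
        have hv' : (v:ℕ) ≠ 0 := fun hh => hv (Fin.ext (by simp [hh, h0]))
        have hw' : (w:ℕ) ≠ 0 := fun hh => hw (Fin.ext (by simp [hh, h0]))
        have : (v:ℕ) = (w:ℕ) := by omega
        have hvw : v = w := Fin.ext this
        apply congrArg Sum.inr
        apply Subtype.ext
        rw [hev, hew, hvw]
    have himg : F n l a c '' Set.univ = Set.Icc 1 (p + n) := by
      apply Set.eq_of_subset_of_ncard_le
      · rintro x ⟨y, -, rfl⟩; exact hmap y
      · rw [Set.ncard_image_of_injOn hinj, Set.ncard_univ, Nat.card_sum,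
          ← Finset.coe_Icc, Set.ncard_coe_finset, Nat.card_Icc,
          Nat.card_coe_set_eq, hq]
        simp [Nat.card_eq_fintype_card, hp]
      · exact Set.finite_Icc _ _
    refine ⟨fun x _ => hmap x, hinj, ?_⟩
    rw [Set.SurjOn, himg]
  · -- magic condition
    rintro u v (⟨hu, hv, hvn⟩ | ⟨hv, hu, hun⟩)
    · subst hu
      have hv' : (v:ℕ) ≠ 0 := fun h => hv (Fin.ext (by simp [h, h0]))
      rw [hFc, hFleaf v hv hvn, hFedge _ v rfl]
      omega
    · subst hv
      have hu' : (u:ℕ) ≠ 0 := fun h => hu (Fin.ext (by simp [h, h0]))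
      rw [hFc, hFleaf u hu hun]
      have : F n l a c (Sum.inr ⟨s(u, 0), by
          rw [mem_edgeSet_iff]; exact ⟨u, hu, hun, Sym2.eq_swap⟩⟩) = p + n + 1 - (u:ℕ) := by
        simp [F, es, h0, hp]
      rw [this]
      omega
  · -- vertex labels in range
    intro v
    rw [hcard]
    have := vl_le n l a c ha hac hc (v:ℕ) (by have := v.isLt; omega)
    simp only [Set.mem_Icc, F]
    omega
  · -- T₂
    intro v hv hvn
    rw [hFc, hFleaf v hv hvn]
    have hv' : (v:ℕ) ≠ 0 := fun h => hv (Fin.ext (by simp [h, h0]))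
    omega

lemma valence_bounds (n l k : ℕ) (hn : 1 ≤ n)
    (f : Fin (n+l+1) ⊕ (starUnion n l).edgeSet → ℕ)
    (hsem : IsSuperEdgeMagic (starUnion n l) f k)
    (hT : ∀ v : Fin (n+l+1), v ≠ 0 → (v:ℕ) ≤ n → f (Sum.inl v) < f (Sum.inl 0)) :
    (n+l+1) + 2*n + 2 ≤ k ∧ k ≤ 3*(n+l+1) := by
  set p := n + l + 1 with hp
  obtain ⟨⟨bij, magic⟩, hvert⟩ := hsem
  rw [Fintype.card_fin, edge_ncard] at bij
  rw [Fintype.card_fin] at hvert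
  have h0 : ((0 : Fin p) : ℕ) = 0 := rfl
  have hvle : ∀ v : Fin p, 1 ≤ f (Sum.inl v) ∧ f (Sum.inl v) ≤ p := by
    intro v; have := hvert v; simpa [Set.mem_Icc] using this
  -- the center label is at least n+1
  have hf0 : n + 1 ≤ f (Sum.inl 0) := by
    have hinjL : Set.InjOn (fun v : Fin p => f (Sum.inl v))
        {v : Fin p | v ≠ 0 ∧ (v:ℕ) ≤ n} := by
      intro v _ w _ h
      exact Sum.inl.inj (bij.injOn (Set.mem_univ _) (Set.mem_univ _) h)
    have hsub : (fun v : Fin p => f (Sum.inl v)) '' {v : Fin p | v ≠ 0 ∧ (v:ℕ) ≤ n}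
        ⊆ Set.Icc 1 (f (Sum.inl 0) - 1) := by
      rintro x ⟨v, ⟨hv, hvn⟩, rfl⟩
      have h1 := (hvle v).1
      have h2 := hT v hv hvn
      simp only [Set.mem_Icc]; omega
    have hle := Set.ncard_le_ncard hsub (Set.finite_Icc _ _)
    rw [Set.ncard_image_of_injOn hinjL, leafSet_ncard,
      ← Finset.coe_Icc, Set.ncard_coe_finset, Nat.card_Icc] at hle
    have := (hvle 0).1
    omega
  -- each label in [p+1, p+n] is the label of an edge
  have hedge : ∀ t, p+1 ≤ t → t ≤ p+n →
      ∃ v : Fin p, v ≠ 0 ∧ (v:ℕ) ≤ n ∧ f (Sum.inl 0) + f (Sum.inl v) + t = k := by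
    intro t ht1 ht2
    have htm : t ∈ Set.Icc 1 (p+n) := by simp only [Set.mem_Icc]; omega
    obtain ⟨x, -, hx⟩ := bij.surjOn htm
    match x with
    | Sum.inl v =>
      have := (hvle v).2
      omega
    | Sum.inr e =>
      obtain ⟨v, hv, hvn, he⟩ := (mem_edgeSet_iff n l e.1).mp e.2
      refine ⟨v, hv, hvn, ?_⟩
      have hadj : (starUnion n l).Adj 0 v := Or.inl ⟨rfl, hv, hvn⟩
      have heq : (⟨s((0:Fin p), v), (starUnion n l).mem_edgeSet.mpr hadj⟩ :
          (starUnion n l).edgeSet) = e := Subtype.ext he.symm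
      have := magic 0 v hadj
      rw [heq, hx] at this
      exact this
  constructor
  · obtain ⟨v, hv, hvn, hk⟩ := hedge (p+n) (by omega) le_rfl
    have := (hvle v).1
    omega
  · obtain ⟨v, hv, hvn, hk⟩ := hedge (p+1) le_rfl (by omega)
    have h1 := hT v hv hvn
    have h2 := (hvle 0).2
    omega

/-- For all positive integers `n` and `l`, the set `S(T₂)` of valences of
type-`T₂` super edge-magic labelings of `K_{1,n} ∪ lK_1` (those with the
center label larger than all leaf labels) consists of consecutive integers:
whenever `k₁, k₂ ∈ S(T₂)` and `k₁ ≤ k ≤ k₂`, also `k ∈ S(T₂)`. -/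
theorem stmt_15 (n l : ℕ) (hn : 1 ≤ n) (hl : 1 ≤ l) :
    ∀ k₁ k₂ k : ℕ,
      (∃ f, IsSuperEdgeMagic (starUnion n l) f k₁ ∧
        ∀ v : Fin (n + l + 1), v ≠ 0 → (v : ℕ) ≤ n →
          f (Sum.inl v) < f (Sum.inl 0)) →
      (∃ f, IsSuperEdgeMagic (starUnion n l) f k₂ ∧
        ∀ v : Fin (n + l + 1), v ≠ 0 → (v : ℕ) ≤ n →
          f (Sum.inl v) < f (Sum.inl 0)) →
      k₁ ≤ k → k ≤ k₂ →
      ∃ f, IsSuperEdgeMagic (starUnion n l) f k ∧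
        ∀ v : Fin (n + l + 1), v ≠ 0 → (v : ℕ) ≤ n →
          f (Sum.inl v) < f (Sum.inl 0) := by
  intro k₁ k₂ k h₁ h₂ hk₁ hk₂
  obtain ⟨f₁, hf₁, hT₁⟩ := h₁
  obtain ⟨f₂, hf₂, hT₂⟩ := h₂
  set p := n + l + 1 with hp
  have hb₁ := valence_bounds n l k₁ hn f₁ hf₁ hT₁
  have hb₂ := valence_bounds n l k₂ hn f₂ hf₂ hT₂
  have hkl : p + 2*n + 2 ≤ k := le_trans hb₁.1 hk₁
  have hku : k ≤ 3*p := le_trans hk₂ hb₂.2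
  have hex : ∃ a c, 1 ≤ a ∧ a + n ≤ c ∧ c ≤ p ∧ a + c + p + n = k := by
    by_cases hcase : k ≤ 2*p + n + 1
    · exact ⟨1, k - p - n - 1, by omega, by omega, by omega, by omega⟩
    · exact ⟨k - 2*p - n, p, by omega, by omega, by omega, by omega⟩
  obtain ⟨a, c, ha, hac, hc, hsum⟩ := hex
  have := aux_construct n l a c hn hl ha hac hc
  rw [hsum] at this
  exact this
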